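/- Let d ≥ 1 and let r^(1), ..., r^(ρ) ∈ (0,1)^d be pairwise incomparable points with no ties in any coordinate. Then the number γ of minimal elements of the record-setting region S satisfies γ ≥ (d-1)ρ + 1. -/
import Mathlib


/-- The record-setting region of the points `r 0, …, r (ρ-1)` within `[0,1)^d`. -/
def recordSet {d ρ : ℕ} (r : Fin ρ → Fin d → ℝ) : Set (Fin d → ℝ) :=
  {x | (∀ j, x j ∈ Set.Ico (0:ℝ) 1) ∧ ∀ i, ¬ ∀ j, x j < r i j}

/-- The generators: minimal elements of the record-setting region. -/
def generators {d ρ : ℕ} (r : Fin ρ → Fin d → ℝ) : Set (Fin d → ℝ) :=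
  {g | g ∈ recordSet r ∧ ∀ y ∈ recordSet r, y ≤ g → y = g}

namespace RecordAux

variable {d ρ : ℕ}

lemma upward {r : Fin ρ → Fin d → ℝ} {x y : Fin d → ℝ}
    (hx : x ∈ recordSet r) (hxy : ∀ j, x j ≤ y j) (hy : ∀ j, y j ∈ Set.Ico (0:ℝ) 1) :
    y ∈ recordSet r :=
  ⟨hy, fun i h => hx.2 i fun j => lt_of_le_of_lt (hxy j) (h j)⟩

lemma exists_generator_le (r : Fin ρ → Fin d → ℝ) {x : Fin d → ℝ} (hx : x ∈ recordSet r) :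
    ∃ g ∈ generators r, ∀ j, g j ≤ x j := by
  classical
  have key : ∀ k : ℕ, k ≤ d → ∃ z, z ∈ recordSet r ∧ (∀ j, z j ≤ x j) ∧
      ∀ j : Fin d, (j : ℕ) < k → ∀ t, 0 ≤ t → t < z j → Function.update z j t ∉ recordSet r := by
    intro k
    induction k with
    | zero => exact fun _ => ⟨x, hx, fun j => le_rfl, fun j hj => absurd hj (Nat.not_lt_zero _)⟩
    | succ k ih =>
      intro hk
      obtain ⟨z, hzS, hzx, hzlow⟩ := ih (Nat.le_of_succ_le hk)
      have hkd : k < d := hk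
      set jk : Fin d := ⟨k, hkd⟩ with hjk
      set T := {t : ℝ | 0 ≤ t ∧ Function.update z jk t ∈ recordSet r} with hT
      have hzT : z jk ∈ T := ⟨(hzS.1 jk).1, by rwa [Function.update_eq_self]⟩
      have hTne : T.Nonempty := ⟨_, hzT⟩
      have hbdd : BddBelow T := ⟨0, fun t ht => ht.1⟩
      set t0 := sInf T with ht0def
      have ht00 : 0 ≤ t0 := le_csInf hTne fun t ht => ht.1
      have ht0z : t0 ≤ z jk := csInf_le hbdd hzT
      have ht0S : Function.update z jk t0 ∈ recordSet r := by
        refine ⟨?_, ?_⟩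
        · intro j
          rcases eq_or_ne j jk with rfl | hj
          · simp only [Function.update_self]
            exact ⟨ht00, lt_of_le_of_lt ht0z (hzS.1 jk).2⟩
          · rw [Function.update_of_ne hj]; exact hzS.1 j
        · intro i hcon
          have h1 : t0 < r i jk := by
            have := hcon jk; rwa [Function.update_self] at this
          obtain ⟨t, htT, htlt⟩ := exists_lt_of_csInf_lt hTne h1
          refine htT.2.2 i fun j => ?_
          rcases eq_or_ne j jk with rfl | hj
          · rwa [Function.update_self]
          · rw [Function.update_of_ne hj]
            have := hcon j; rwa [Function.update_of_ne hj] at this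
      refine ⟨Function.update z jk t0, ht0S, ?_, ?_⟩
      · intro j
        rcases eq_or_ne j jk with rfl | hj
        · rw [Function.update_self]; exact ht0z.trans (hzx jk)
        · rw [Function.update_of_ne hj]; exact hzx j
      · intro j hjlt t ht0' htlt hmem
        rcases eq_or_ne j jk with rfl | hj
        · rw [Function.update_self] at htlt
          rw [Function.update_idem] at hmem
          have : t0 ≤ t := csInf_le hbdd ⟨ht0', hmem⟩
          exact absurd htlt (not_lt.mpr this)
        · have hjk' : (j : ℕ) < k := by
            have h2 : (j : ℕ) ≠ k := fun hc => hj (Fin.ext hc)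
            omega
          rw [Function.update_of_ne hj] at htlt
          apply hzlow j hjk' t ht0' htlt
          refine upward hmem (fun j' => ?_) (fun j' => ?_)
          · rcases eq_or_ne j' j with rfl | h1
            · rw [Function.update_self, Function.update_self]
            · rw [Function.update_of_ne h1]
              rcases eq_or_ne j' jk with rfl | h2
              · simp only [Function.update_of_ne h1, Function.update_self]
                exact ht0z
              · simp only [Function.update_of_ne h1, Function.update_of_ne h2]
                exact le_rfl
          · rcases eq_or_ne j' j with rfl | h1
            · rw [Function.update_self]
              refine ⟨ht0', htlt.trans ?_⟩
              exact (hzS.1 j').2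
            · rw [Function.update_of_ne h1]; exact hzS.1 j'
  obtain ⟨z, hzS, hzx, hzlow⟩ := key d le_rfl
  refine ⟨z, ⟨hzS, ?_⟩, hzx⟩
  intro w hwS hwz
  by_contra hne
  obtain ⟨j, hj⟩ : ∃ j, w j ≠ z j := Function.ne_iff.mp hne
  have hwj : w j < z j := lt_of_le_of_ne (hwz j) hj
  apply hzlow j j.isLt (w j) (hwS.1 j).1 hwj
  refine upward hwS (fun k => ?_) (fun k => ?_)
  · rcases eq_or_ne k j with rfl | h
    · rw [Function.update_self]
    · rw [Function.update_of_ne h]; exact hwz k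
  · rcases eq_or_ne k j with rfl | h
    · rw [Function.update_self]; exact hwS.1 k
    · rw [Function.update_of_ne h]; exact hzS.1 k

lemma generator_witness {r : Fin ρ → Fin d → ℝ} {g : Fin d → ℝ}
    (hg : g ∈ generators r) {j : Fin d} (hj : 0 < g j) :
    ∃ i, g j = r i j ∧ ∀ k, k ≠ j → g k < r i k := by
  classical
  obtain ⟨hgS, hgmin⟩ := hg
  have hupd : ∀ t : ℝ, 0 ≤ t → t < g j → ∃ i, t < r i j ∧ ∀ k, k ≠ j → g k < r i k := by
    intro t ht0 htj
    have hne : Function.update g j t ∉ recordSet r := by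
      intro hmem
      have heq := hgmin _ hmem (by
        intro k
        rcases eq_or_ne k j with rfl | h
        · rw [Function.update_self]; exact htj.le
        · rw [Function.update_of_ne h])
      have : t = g j := by
        have := congrFun heq j
        rwa [Function.update_self] at this
      exact absurd htj (by rw [this]; exact lt_irrefl _)
    have hbox : ∀ k, Function.update g j t k ∈ Set.Ico (0:ℝ) 1 := by
      intro k
      rcases eq_or_ne k j with rfl | h
      · rw [Function.update_self]; exact ⟨ht0, htj.trans (hgS.1 k).2⟩
      · rw [Function.update_of_ne h]; exact hgS.1 k
    by_contra hcon
    push_neg at hcon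
    apply hne
    refine ⟨hbox, fun i hi => ?_⟩
    obtain ⟨k, hkj, hkle⟩ := hcon i (by have := hi j; rwa [Function.update_self] at this)
    have := hi k
    rw [Function.update_of_ne hkj] at this
    exact absurd this (not_lt.mpr hkle)
  obtain ⟨i₀, _, hi₀⟩ := hupd 0 le_rfl hj
  set I : Finset (Fin ρ) := Finset.univ.filter (fun i => ∀ k, k ≠ j → g k < r i k) with hI
  have hi₀I : i₀ ∈ I := Finset.mem_filter.mpr ⟨Finset.mem_univ _, hi₀⟩
  have hIne : I.Nonempty := ⟨i₀, hi₀I⟩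
  have hmain : ∃ i, (∀ k, k ≠ j → g k < r i k) ∧ g j ≤ r i j := by
    by_contra hcon
    push_neg at hcon
    set t : ℝ := max 0 (I.sup' hIne fun i => r i j) with ht
    have ht0 : 0 ≤ t := le_max_left _ _
    have htj : t < g j := by
      apply max_lt hj
      rw [Finset.sup'_lt_iff]
      intro i hiI
      exact hcon i (by simpa [hI] using hiI)
    obtain ⟨i, hij, hik⟩ := hupd t ht0 htj
    have hiI : i ∈ I := Finset.mem_filter.mpr ⟨Finset.mem_univ _, hik⟩
    have : r i j ≤ t := le_trans (Finset.le_sup' (fun i => r i j) hiI) (le_max_right _ _)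
    exact absurd hij (not_lt.mpr this)
  obtain ⟨i, hik, hij⟩ := hmain
  have hgi := hgS.2 i
  push_neg at hgi
  obtain ⟨k, hk⟩ := hgi
  rcases eq_or_ne k j with rfl | h
  · exact ⟨i, le_antisymm hij hk, hik⟩
  · exact absurd (hik k h) (not_lt.mpr hk)

lemma generators_finite (r : Fin ρ → Fin d → ℝ) : (generators r).Finite := by
  classical
  have hsub : generators r ⊆ Set.pi Set.univ
      (fun j => insert (0:ℝ) (Set.range fun i => r i j)) := by
    intro g hg j _
    rcases eq_or_lt_of_le (hg.1.1 j).1 with h | h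
    · exact Set.mem_insert_iff.mpr (Or.inl h.symm)
    · obtain ⟨i, hi, _⟩ := generator_witness hg h
      exact Set.mem_insert_iff.mpr (Or.inr ⟨i, hi.symm⟩)
  exact (Set.Finite.pi fun j => (Set.finite_range _).insert 0).subset hsub

lemma main (d : ℕ) (hd : 1 ≤ d) :
    ∀ ρ : ℕ, ∀ r : Fin ρ → Fin d → ℝ,
      (∀ i j, r i j ∈ Set.Ioo (0:ℝ) 1) →
      (∀ j : Fin d, Function.Injective (fun i => r i j)) →
      (∀ i i' : Fin ρ, i ≠ i' → ¬ r i ≤ r i') →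
      (d - 1) * ρ + 1 ≤ (generators r).ncard := by
  intro ρ
  induction ρ with
  | zero =>
    intro r _ _ _
    have h0S : (fun _ : Fin d => (0:ℝ)) ∈ recordSet r :=
      ⟨fun j => ⟨le_rfl, one_pos⟩, fun i => i.elim0⟩
    have : generators r = {fun _ => (0:ℝ)} := by
      ext g
      constructor
      · intro hg
        have := hg.2 _ h0S (fun j => (hg.1.1 j).1)
        exact (this.symm : g = _)
      · rintro rfl
        refine ⟨h0S, fun y hy hle => funext fun j => le_antisymm (hle j) (hy.1 j).1⟩
    rw [this, Set.ncard_singleton]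
    omega
  | succ n ih =>
    intro r hr hties hinc
    classical
    set c0 : Fin d := ⟨0, hd⟩ with hc0
    obtain ⟨i0, hi0⟩ : ∃ i0 : Fin (n+1), ∀ i, r i0 c0 ≤ r i c0 :=
      Finite.exists_min (fun i => r i c0)
    set y : Fin d → ℝ := r i0 with hydef
    set r' : Fin n → Fin d → ℝ := fun i => r (i0.succAbove i) with hr'def
    have hsa_ne : ∀ i : Fin n, i0.succAbove i ≠ i0 := fun i => Fin.succAbove_ne i0 i
    have hr'1 : ∀ i j, r' i j ∈ Set.Ioo (0:ℝ) 1 := fun i j => hr _ j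
    have hr'ties : ∀ j, Function.Injective fun i => r' i j := by
      intro j a b hab
      exact Fin.succAbove_right_injective (hties j hab)
    have hr'inc : ∀ i i' : Fin n, i ≠ i' → ¬ r' i ≤ r' i' := by
      intro i i' hne
      exact hinc _ _ (fun h => hne (Fin.succAbove_right_injective h))
    have hZcard := ih r' hr'1 hr'ties hr'inc
    have hy_pos : ∀ k, 0 < y k := fun k => (hr i0 k).1
    have hy_lt1 : ∀ k, y k < 1 := fun k => (hr i0 k).2
    -- basic set relations
    have hS'S : recordSet r ⊆ recordSet r' := fun x hx => ⟨hx.1, fun i => hx.2 _⟩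
    have hmemS' : ∀ x, x ∈ recordSet r' → (¬ ∀ j, x j < y j) → x ∈ recordSet r := by
      intro x hx hxy
      refine ⟨hx.1, fun i => ?_⟩
      rcases eq_or_ne i i0 with rfl | hne
      · exact hxy
      · obtain ⟨i', rfl⟩ := Fin.exists_succAbove_eq hne
        exact hx.2 i'
    have hymin : ∀ i : Fin n, y c0 < r' i c0 := by
      intro i
      rcases lt_or_eq_of_le (hi0 (i0.succAbove i)) with h | h
      · exact h
      · exact absurd (hties c0 h).symm (hsa_ne i)
    set Z := generators r' with hZdef
    set Z' := generators r with hZ'def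
    set A := {g ∈ Z | ∀ k, g k < y k} with hAdef
    have hAZ : A ⊆ Z := fun g hg => hg.1
    -- old generators that survive
    have hZA : Z \ A ⊆ Z' := by
      rintro g ⟨hgZ, hgA⟩
      have hgS' : g ∈ recordSet r :=
        hmemS' g hgZ.1 (fun hc => hgA ⟨hgZ, hc⟩)
      exact ⟨hgS', fun x hx hxle => hgZ.2 x (hS'S hx) hxle⟩
    -- generators of r' below y are strictly dominated
    have hZ_lty : ∀ g ∈ Z, (∀ j, g j ≤ y j) → ∀ k, g k < y k := by
      intro g hgZ hgle k
      rcases eq_or_lt_of_le ((hgZ.1.1 k).1) with h0 | h0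
      · rw [← h0]; exact hy_pos k
      · obtain ⟨i, hik, _⟩ := generator_witness hgZ h0
        rcases lt_or_eq_of_le (hgle k) with h | h
        · exact h
        · exfalso
          apply hsa_ne i
          apply hties k
          show r' i k = y k
          rw [← hik]
          exact h
    -- A is nonempty
    have hyS : y ∈ recordSet r' := by
      refine ⟨fun j => ⟨(hy_pos j).le, hy_lt1 j⟩, fun i hcon => ?_⟩
      exact hinc i0 (i0.succAbove i) (fun h => hsa_ne i h.symm) (fun j => (hcon j).le)
    obtain ⟨a0, ha0Z, ha0y⟩ := exists_generator_le r' hyS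
    have ha0A : a0 ∈ A := ⟨ha0Z, hZ_lty a0 ha0Z ha0y⟩
    -- the B sets
    set B : Fin d → Set (Fin d → ℝ) :=
      fun j => {b ∈ Z' | b j = y j ∧ ∀ k, k ≠ j → b k < y k} with hBdef
    have hBZ' : ∀ j, B j ⊆ Z' := fun j b hb => hb.1
    have hBdisj : ∀ j j' : Fin d, j ≠ j' → ∀ b, b ∈ B j → b ∉ B j' := by
      intro j j' hne b hbj hbj'
      exact absurd hbj.2.1 (ne_of_lt (hbj'.2.2 j hne))
    have hBnotZ : ∀ j : Fin d, ∀ b ∈ B j, b ∉ Z \ A := by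
      intro j b hb hbZ
      have hbpos : 0 < b j := by rw [hb.2.1]; exact hy_pos j
      obtain ⟨i, hij, _⟩ := generator_witness hbZ.1 hbpos
      apply hsa_ne i
      apply hties j
      show r' i j = y j
      rw [← hij]
      exact hb.2.1
    -- construction of new generators
    have hπex : ∀ (j : Fin d) (a : Fin d → ℝ),
        ∃ b, a ∈ A → (b ∈ B j ∧ ∀ k, k ≠ j → b k ≤ a k) := by
      intro j a
      by_cases ha : a ∈ A
      · have haZ := ha.1
        have halt := ha.2
        set aj := Function.update a j (y j) with hajdef
        have haj_ge : ∀ k, a k ≤ aj k := by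
          intro k
          rw [hajdef]
          rcases eq_or_ne k j with rfl | h
          · rw [Function.update_self]; exact (halt k).le
          · rw [Function.update_of_ne h]
        have hajbox : ∀ k, aj k ∈ Set.Ico (0:ℝ) 1 := by
          intro k
          rw [hajdef]
          rcases eq_or_ne k j with rfl | h
          · rw [Function.update_self]; exact ⟨(hy_pos k).le, hy_lt1 k⟩
          · rw [Function.update_of_ne h]; exact haZ.1.1 k
        have hajS : aj ∈ recordSet r' := upward haZ.1 haj_ge hajbox
        have hajS' : aj ∈ recordSet r := by
          apply hmemS' aj hajS
          intro hcc
          have := hcc j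
          rw [hajdef, Function.update_self] at this
          exact absurd this (lt_irrefl _)
        obtain ⟨b, hbZ', hble⟩ := exists_generator_le r hajS'
        have hble' : ∀ k, k ≠ j → b k ≤ a k := by
          intro k hk
          have := hble k
          rwa [hajdef, Function.update_of_ne hk] at this
        have hblt : ∀ k, k ≠ j → b k < y k :=
          fun k hk => lt_of_le_of_lt (hble' k hk) (halt k)
        have hbj : b j = y j := by
          have h1 : b j ≤ y j := by
            have := hble j
            rwa [hajdef, Function.update_self] at this
          have h2 := hbZ'.1.2 i0
          push_neg at h2
          obtain ⟨k, hk⟩ := h2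
          rcases eq_or_ne k j with rfl | h
          · exact le_antisymm h1 hk
          · exact absurd (hblt k h) (not_lt.mpr hk)
        exact ⟨b, fun _ => ⟨⟨hbZ', hbj, hblt⟩, hble'⟩⟩
      · exact ⟨a, fun h => absurd h ha⟩
    choose π hπ using hπex
    -- injectivity at coordinate c0
    have hinj : Set.InjOn (π c0) A := by
      intro a haA a' ha'A heq
      by_contra hne
      set m : Fin d → ℝ := fun k => min (a k) (a' k) with hmdef
      have hmlea : ∀ k, m k ≤ a k := fun k => min_le_left _ _
      have hmlea' : ∀ k, m k ≤ a' k := fun k => min_le_right _ _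
      have hm_ne : m ≠ a := by
        intro h
        apply hne
        refine ha'A.1.2 a haA.1.1 ?_
        intro k
        rw [← h]
        exact hmlea' k
      have hmS : m ∉ recordSet r' := by
        intro hmS
        exact hm_ne (haA.1.2 m hmS hmlea)
      have hmbox : ∀ k, m k ∈ Set.Ico (0:ℝ) 1 := fun k =>
        ⟨le_min (haA.1.1.1 k).1 (ha'A.1.1.1 k).1,
          lt_of_le_of_lt (hmlea k) (haA.1.1.1 k).2⟩
      have hdom : ∃ i, ∀ k, m k < r' i k := by
        by_contra h
        push_neg at h
        apply hmS
        refine ⟨hmbox, fun i hcon => ?_⟩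
        obtain ⟨k, hk⟩ := h i
        exact absurd (hcon k) (not_lt.mpr hk)
      obtain ⟨i, hi⟩ := hdom
      have hb := hπ c0 a haA
      have hb' := hπ c0 a' ha'A
      have hbS : π c0 a ∈ recordSet r' := hS'S hb.1.1.1
      have h2 := hbS.2 i
      push_neg at h2
      obtain ⟨k, hk⟩ := h2
      rcases eq_or_ne k c0 with rfl | hkne
      · have h3 : π c0 a c0 = y c0 := hb.1.2.1
        rw [h3] at hk
        exact absurd (hymin i) (not_lt.mpr hk)
      · have h1 : π c0 a k ≤ m k := by
          refine le_min (hb.2 k hkne) ?_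
          rw [heq]
          exact hb'.2 k hkne
        exact absurd (hi k) (not_lt.mpr (hk.trans h1))
    -- finiteness
    have hZfin : Z.Finite := generators_finite r'
    have hZ'fin : Z'.Finite := generators_finite r
    have hAfin : A.Finite := hZfin.subset hAZ
    -- the three pieces
    set P1 := Z \ A with hP1
    set P2 := π c0 '' A with hP2
    set P3 := (fun j : Fin d => π j a0) '' {j : Fin d | j ≠ c0} with hP3
    have hP2B : ∀ b ∈ P2, b ∈ B c0 := by
      rintro b ⟨a, haA, rfl⟩
      exact (hπ c0 a haA).1
    have hP3B : ∀ b ∈ P3, ∃ j, j ≠ c0 ∧ b ∈ B j := by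
      rintro b ⟨j, hj, rfl⟩
      exact ⟨j, hj, (hπ j a0 ha0A).1⟩
    have hsub : P1 ∪ P2 ∪ P3 ⊆ Z' := by
      intro b hb
      rcases hb with (hb | hb) | hb
      · exact hZA hb
      · exact hBZ' c0 (hP2B b hb)
      · obtain ⟨j, _, hbj⟩ := hP3B b hb
        exact hBZ' j hbj
    have hd12 : Disjoint P1 P2 := by
      rw [Set.disjoint_right]
      intro b hb2 hb1
      exact hBnotZ c0 b (hP2B b hb2) hb1
    have hd13 : Disjoint P1 P3 := by
      rw [Set.disjoint_right]
      intro b hb3 hb1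
      obtain ⟨j, _, hbj⟩ := hP3B b hb3
      exact hBnotZ j b hbj hb1
    have hd23 : Disjoint P2 P3 := by
      rw [Set.disjoint_right]
      intro b hb3 hb2
      obtain ⟨j, hjne, hbj⟩ := hP3B b hb3
      exact hBdisj j c0 hjne b hbj (hP2B b hb2)
    have hP1fin : P1.Finite := hZfin.subset Set.diff_subset
    have hP2fin : P2.Finite := (hAfin.image _)
    have hP3fin : P3.Finite := Set.Finite.image _ (Set.toFinite _)
    -- cardinalities
    have hcard2 : P2.ncard = A.ncard := Set.ncard_image_of_injOn hinj
    have hinj3 : Set.InjOn (fun j : Fin d => π j a0) {j : Fin d | j ≠ c0} := by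
      intro j hj j' hj' heq
      by_contra hne
      have heq' : π j a0 = π j' a0 := heq
      have h2 : π j a0 ∈ B j' := by rw [heq']; exact (hπ j' a0 ha0A).1
      exact hBdisj j j' hne _ (hπ j a0 ha0A).1 h2
    have hcard3 : P3.ncard = d - 1 := by
      rw [hP3, Set.ncard_image_of_injOn hinj3]
      have : {j : Fin d | j ≠ c0} = Set.univ \ {c0} := by
        ext j; simp
      rw [this, Set.ncard_diff (Set.subset_univ _), Set.ncard_univ, Set.ncard_singleton,
        Nat.card_eq_fintype_card, Fintype.card_fin]
    have hcard1 : P1.ncard = Z.ncard - A.ncard := Set.ncard_diff hAZ hAfin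
    have hAle : A.ncard ≤ Z.ncard := Set.ncard_le_ncard hAZ hZfin
    have htot : P1.ncard + P2.ncard + P3.ncard ≤ Z'.ncard := by
      have h1 : (P1 ∪ P2 ∪ P3).ncard ≤ Z'.ncard :=
        Set.ncard_le_ncard hsub hZ'fin
      rwa [Set.ncard_union_eq (Set.disjoint_union_left.mpr ⟨hd13, hd23⟩)
          (hP1fin.union hP2fin) hP3fin,
        Set.ncard_union_eq hd12 hP1fin hP2fin] at h1
    rw [hcard1, hcard2, hcard3] at htot
    have hmul : (d - 1) * (n + 1) = (d - 1) * n + (d - 1) := by ring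
    omega

end RecordAux

theorem generators_lower_bound (d ρ : ℕ) (hd : 1 ≤ d)
    (r : Fin ρ → Fin d → ℝ)
    (hr : ∀ i j, r i j ∈ Set.Ioo (0:ℝ) 1)
    (hties : ∀ j : Fin d, Function.Injective (fun i => r i j))
    (hinc : ∀ i i' : Fin ρ, i ≠ i' → ¬ r i ≤ r i') :
    (d - 1) * ρ + 1 ≤ (generators r).ncard :=
  RecordAux.main d hd ρ r hr hties hinc
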